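/- (Ando–Hemmen inequality) For symmetric positive definite matrices u and v, the spectral (or Frobenius) norm of u^{1/2} - v^{1/2} is bounded by [λ_min(u)^{1/2} + λ_min(v)^{1/2}]^{-1} times the corresponding norm of u - v. -/

import Mathlib

open Matrix
open scoped Classical

/-- The principal symmetric positive semidefinite square root of a matrix
(junk value `0` if the matrix is not positive semidefinite). -/
noncomputable def psqrt {d : ℕ} (A : Matrix (Fin d) (Fin d) ℝ) : Matrix (Fin d) (Fin d) ℝ :=
  if h : A.PosSemidef then
    (h.1.eigenvectorUnitary : Matrix (Fin d) (Fin d) ℝ) *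
      diagonal ((RCLike.ofReal : ℝ → ℝ) ∘ Real.sqrt ∘ h.1.eigenvalues) *
      (star h.1.eigenvectorUnitary : Matrix (Fin d) (Fin d) ℝ)
  else 0

/-- The Frobenius norm of a real square matrix. -/
noncomputable def frob {d : ℕ} (A : Matrix (Fin d) (Fin d) ℝ) : ℝ :=
  Real.sqrt ((Aᵀ * A).trace)

lemma frob_eq {d : ℕ} (M : Matrix (Fin d) (Fin d) ℝ) :
    frob M = Real.sqrt (∑ j, ∑ i, (M i j)^2) := by
  unfold frob
  congr 1
  rw [Matrix.trace]
  simp [Matrix.diag, Matrix.mul_apply, sq]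

lemma frob_unitary_conj {d : ℕ} (P Q M : Matrix (Fin d) (Fin d) ℝ)
    (hP : P ∈ Matrix.unitaryGroup (Fin d) ℝ) (hQ : Q ∈ Matrix.unitaryGroup (Fin d) ℝ) :
    frob (star P * M * Q) = frob M := by
  have hPP : ∀ X : Matrix (Fin d) (Fin d) ℝ, P * (star P * X) = X := fun X => by
    rw [← mul_assoc, Matrix.mem_unitaryGroup_iff.mp hP, one_mul]
  have hQQ : Q * star Q = 1 := Matrix.mem_unitaryGroup_iff.mp hQ
  have ht : ∀ (X : Matrix (Fin d) (Fin d) ℝ), Xᵀ = star X := fun X => by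
    ext i j; simp [Matrix.star_apply]
  unfold frob
  rw [ht, ht]
  congr 1
  have key : star (star P * M * Q) * (star P * M * Q) = star Q * ((star M * M) * Q) := by
    simp only [StarMul.star_mul, star_star, mul_assoc, hPP]
  rw [key, Matrix.trace_mul_comm, mul_assoc, hQQ, mul_one]

/-- (Ando–Hemmen inequality) For symmetric positive definite matrices `u` and `v`, the
(Frobenius, unitarily invariant) norm of `u^{1/2} - v^{1/2}` is bounded by
`[λ_min(u)^{1/2} + λ_min(v)^{1/2}]⁻¹` times the corresponding norm of `u - v`. -/
theorem ando_hemmen {d : ℕ} (u v : Matrix (Fin d) (Fin d) ℝ)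
    (hu : u.PosDef) (hv : v.PosDef) :
    frob (psqrt u - psqrt v) ≤
      (Real.sqrt (⨅ i, hu.1.eigenvalues i) + Real.sqrt (⨅ i, hv.1.eigenvalues i))⁻¹ *
        frob (u - v) := by
  rcases Nat.eq_zero_or_pos d with hd | hd
  · subst hd
    have h1 : frob (psqrt u - psqrt v) = 0 := by
      rw [frob_eq]; simp
    have h2 : frob (u - v) = 0 := by rw [frob_eq]; simp
    rw [h1, h2]; simp
  haveI : NeZero d := ⟨hd.ne'⟩
  set A := psqrt u with hAdef
  set B := psqrt v with hBdef
  set P : Matrix (Fin d) (Fin d) ℝ := (hu.1.eigenvectorUnitary : Matrix (Fin d) (Fin d) ℝ) with hPdef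
  set Q : Matrix (Fin d) (Fin d) ℝ := (hv.1.eigenvectorUnitary : Matrix (Fin d) (Fin d) ℝ) with hQdef
  have hP : P ∈ Matrix.unitaryGroup (Fin d) ℝ := (hu.1.eigenvectorUnitary).2
  have hQ : Q ∈ Matrix.unitaryGroup (Fin d) ℝ := (hv.1.eigenvectorUnitary).2
  have hPP : ∀ X : Matrix (Fin d) (Fin d) ℝ, P * (star P * X) = X := fun X => by
    rw [← mul_assoc, Matrix.mem_unitaryGroup_iff.mp hP, one_mul]
  have hQQ : ∀ X : Matrix (Fin d) (Fin d) ℝ, Q * (star Q * X) = X := fun X => by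
    rw [← mul_assoc, Matrix.mem_unitaryGroup_iff.mp hQ, one_mul]
  have hPsP : star P * P = 1 := Matrix.mem_unitaryGroup_iff'.mp hP
  have hQsQ : star Q * Q = 1 := Matrix.mem_unitaryGroup_iff'.mp hQ
  set du : Fin d → ℝ := fun i => Real.sqrt (hu.1.eigenvalues i) with hdu
  set dv : Fin d → ℝ := fun i => Real.sqrt (hv.1.eigenvalues i) with hdv
  have hAeq : A = P * diagonal du * star P := by
    rw [hAdef, psqrt, dif_pos hu.posSemidef]
    rfl
  have hBeq : B = Q * diagonal dv * star Q := by
    rw [hBdef, psqrt, dif_pos hv.posSemidef]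
    rfl
  have hDu : star P * A * P = diagonal du := by
    rw [hAeq]
    rw [mul_assoc, mul_assoc, mul_assoc, hPsP, mul_one, ← mul_assoc, hPsP, one_mul]
  have hDv : star Q * B * Q = diagonal dv := by
    rw [hBeq]
    rw [mul_assoc, mul_assoc, mul_assoc, hQsQ, mul_one, ← mul_assoc, hQsQ, one_mul]
  have hA2 : A * A = u := by
    have hs := hu.1.spectral_theorem
    rw [Unitary.conjStarAlgAut_apply] at hs
    rw [hAeq]
    conv_rhs => rw [hs]
    rw [show P * diagonal du * star P * (P * diagonal du * star P)
        = P * (diagonal du * (star P * P) * diagonal du) * star P by simp only [mul_assoc],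
      hPsP, mul_one, diagonal_mul_diagonal]
    have hf : (fun i => du i * du i) = (RCLike.ofReal ∘ hu.1.eigenvalues) :=
      funext fun i => Real.mul_self_sqrt (hu.posSemidef.eigenvalues_nonneg i)
    rw [hf]
  have hB2 : B * B = v := by
    have hs := hv.1.spectral_theorem
    rw [Unitary.conjStarAlgAut_apply] at hs
    rw [hBeq]
    conv_rhs => rw [hs]
    rw [show Q * diagonal dv * star Q * (Q * diagonal dv * star Q)
        = Q * (diagonal dv * (star Q * Q) * diagonal dv) * star Q by simp only [mul_assoc],
      hQsQ, mul_one, diagonal_mul_diagonal]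
    have hf : (fun i => dv i * dv i) = (RCLike.ofReal ∘ hv.1.eigenvalues) :=
      funext fun i => Real.mul_self_sqrt (hv.posSemidef.eigenvalues_nonneg i)
    rw [hf]
  set Y : Matrix (Fin d) (Fin d) ℝ := star P * (A - B) * Q with hYdef
  set C : Matrix (Fin d) (Fin d) ℝ := star P * (u - v) * Q with hCdef
  have expand : A * (A - B) + (A - B) * B = u - v := by
    rw [Matrix.mul_sub, Matrix.sub_mul, hA2, hB2]
    abel
  have hrel : C = diagonal du * Y + Y * diagonal dv := by
    rw [← hDu, ← hDv, hCdef, hYdef, ← expand]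
    simp only [Matrix.mul_add, Matrix.add_mul, mul_assoc, hPP, hQQ]
  -- minimal eigenvalue bound
  set m : ℝ := Real.sqrt (⨅ i, hu.1.eigenvalues i) + Real.sqrt (⨅ i, hv.1.eigenvalues i) with hm
  have hmleu : ∀ i, Real.sqrt (⨅ i, hu.1.eigenvalues i) ≤ du i := fun i =>
    Real.sqrt_le_sqrt (ciInf_le (Finite.bddBelow_range _) i)
  have hmlev : ∀ j, Real.sqrt (⨅ i, hv.1.eigenvalues i) ≤ dv j := fun j =>
    Real.sqrt_le_sqrt (ciInf_le (Finite.bddBelow_range _) j)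
  have hmpos : 0 < m := by
    have h1 : 0 < ⨅ i, hu.1.eigenvalues i := by
      obtain ⟨i₀, hi₀⟩ := Finite.exists_min (hu.1.eigenvalues)
      exact lt_of_lt_of_le (hu.eigenvalues_pos i₀) (le_ciInf hi₀)
    have h2 : (0:ℝ) ≤ ⨅ i, hv.1.eigenvalues i := by
      obtain ⟨i₀, hi₀⟩ := Finite.exists_min (hv.1.eigenvalues)
      exact le_trans (hv.eigenvalues_pos i₀).le (le_ciInf hi₀)
    have := Real.sqrt_pos.mpr h1
    have := Real.sqrt_nonneg (⨅ i, hv.1.eigenvalues i)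
    rw [hm]; linarith
  -- entrywise bound
  have hentry : ∀ i j, |Y i j| ≤ m⁻¹ * |C i j| := by
    intro i j
    have hC : C i j = (du i + dv j) * Y i j := by
      rw [hrel]
      simp [Matrix.add_apply, Matrix.diagonal_mul, Matrix.mul_diagonal]
      ring
    have hsum : m ≤ du i + dv j := add_le_add (hmleu i) (hmlev j)
    have : m * |Y i j| ≤ |C i j| := by
      rw [hC, abs_mul]
      have h0 : 0 ≤ |Y i j| := abs_nonneg _
      have : (du i + dv j) = |du i + dv j| := by
        rw [abs_of_nonneg]; linarith [hmpos]
      nlinarith [abs_nonneg (Y i j)]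
    rw [← mul_le_mul_iff_right₀ hmpos, ← mul_assoc, mul_inv_cancel₀ hmpos.ne', one_mul]
    exact this
  -- sum the squares
  have hsumsq : ∑ j, ∑ i, (Y i j)^2 ≤ m⁻¹^2 * ∑ j, ∑ i, (C i j)^2 := by
    rw [Finset.mul_sum]
    refine Finset.sum_le_sum fun j _ => ?_
    rw [Finset.mul_sum]
    refine Finset.sum_le_sum fun i _ => ?_
    have := hentry i j
    have h2 : (Y i j)^2 = |Y i j|^2 := (sq_abs _).symm
    have h3 : (C i j)^2 = |C i j|^2 := (sq_abs _).symm
    rw [h2, h3, ← mul_pow]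
    exact pow_le_pow_left₀ (abs_nonneg _) this 2
  -- conclude
  have hfY : frob (A - B) = frob Y := (frob_unitary_conj P Q (A - B) hP hQ).symm
  have hfC : frob C = frob (u - v) := frob_unitary_conj P Q (u - v) hP hQ
  rw [hfY, frob_eq, ← hfC, frob_eq C]
  calc Real.sqrt (∑ j, ∑ i, (Y i j)^2)
      ≤ Real.sqrt (m⁻¹^2 * ∑ j, ∑ i, (C i j)^2) := Real.sqrt_le_sqrt hsumsq
    _ = m⁻¹ * Real.sqrt (∑ j, ∑ i, (C i j)^2) := by
        rw [Real.sqrt_mul (sq_nonneg _), Real.sqrt_sq (inv_nonneg.mpr hmpos.le)]
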